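/- Let E be a real Hilbert space, γ > 0, and 0 < μ ≤ 1/γ. Let (L_t)_{t ∈ ℕ} be a sequence of nonnegative differentiable functions L_t : E → ℝ whose gradients ∇L_t are all γ-Lipschitz, let (v_t)_{t ∈ ℕ} be a sequence in E, and define θ_{t+1} := θ_t − μ·v_t from an initial point θ_0 ∈ E. Assume that for every t, L_{t+1}(θ_{t+1}) ≤ L_t(θ_{t+1}). Then for every T ≥ 1, (1/T)·Σ_{t=0}^{T−1} ‖∇L_t(θ_t)‖² ≤ 2·L_0(θ_0)/(μ·T) + (1/T)·Σ_{t=0}^{T−1} ‖v_t − ∇L_t(θ_t)‖². (Averaged gradient-norm bound: the mean squared gradient norm along the trajectory is bounded by an O(1/T) term plus the average squared deviation of the updates from the true gradients.) -/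

import Mathlib

open Finset

lemma descent_lemma
    {E : Type*} [NormedAddCommGroup E] [InnerProductSpace ℝ E] [CompleteSpace E]
    (γ : ℝ) (hγ : 0 < γ) (f : E → ℝ) (hf : Differentiable ℝ f)
    (hlip : ∀ x y : E, ‖gradient f x - gradient f y‖ ≤ γ * ‖x - y‖)
    (x u : E) :
    f (x + u) ≤ f x + inner ℝ (gradient f x) u + γ / 2 * ‖u‖ ^ 2 := by
  set g := gradient f with hg
  set φ : ℝ → ℝ := fun s => f (x + s • u) - s * inner ℝ (g x) u - γ * s ^ 2 / 2 * ‖u‖ ^ 2 with hφ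
  have hline : ∀ s : ℝ, HasDerivAt (fun s : ℝ => x + s • u) u s := by
    intro s
    simpa using ((hasDerivAt_id s).smul_const u).const_add x
  have hderiv : ∀ s : ℝ, HasDerivAt φ
      ((inner ℝ (g (x + s • u)) u : ℝ) - inner ℝ (g x) u - γ * s * ‖u‖ ^ 2) s := by
    intro s
    have h1 : HasDerivAt (fun s : ℝ => f (x + s • u)) (inner ℝ (g (x + s • u)) u : ℝ) s := by
      have := ((hf (x + s • u)).hasGradientAt.hasFDerivAt).comp_hasDerivAt s (hline s)
      simpa [Function.comp_def, hg, gradient, InnerProductSpace.toDual_symm_apply] using this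
    have h2 : HasDerivAt (fun s : ℝ => s * (inner ℝ (g x) u : ℝ)) (inner ℝ (g x) u : ℝ) s := by
      simpa using (hasDerivAt_id s).mul_const (inner ℝ (g x) u : ℝ)
    have h3 : HasDerivAt (fun s : ℝ => γ * s ^ 2 / 2 * ‖u‖ ^ 2) (γ * s * ‖u‖ ^ 2) s := by
      have : HasDerivAt (fun s : ℝ => s ^ 2) (2 * s) s := by
        simpa using hasDerivAt_pow 2 s
      have := ((this.const_mul γ).div_const 2).mul_const (‖u‖ ^ 2)
      have e : γ * (2 * s) / 2 * ‖u‖ ^ 2 = γ * s * ‖u‖ ^ 2 := by ring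
      rwa [e] at this
    exact (h1.sub h2).sub h3
  have hanti : AntitoneOn φ (Set.Icc 0 1) := by
    apply antitoneOn_of_deriv_nonpos (convex_Icc 0 1)
    · exact fun s _ => (hderiv s).continuousAt.continuousWithinAt
    · intro s hs
      exact ((hderiv s).differentiableAt).differentiableWithinAt
    · intro s hs
      rw [interior_Icc] at hs
      rw [(hderiv s).deriv]
      have hs0 : 0 ≤ s := le_of_lt hs.1
      have key : (inner ℝ (g (x + s • u)) u : ℝ) - inner ℝ (g x) u
          ≤ γ * s * ‖u‖ ^ 2 := by
        have h1 : (inner ℝ (g (x + s • u)) u : ℝ) - inner ℝ (g x) u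
            = inner ℝ (g (x + s • u) - g x) u := by
          rw [inner_sub_left]
        rw [h1]
        calc (inner ℝ (g (x + s • u) - g x) u : ℝ)
            ≤ ‖g (x + s • u) - g x‖ * ‖u‖ := real_inner_le_norm _ _
          _ ≤ γ * ‖x + s • u - x‖ * ‖u‖ := by
              apply mul_le_mul_of_nonneg_right _ (norm_nonneg _)
              exact hlip _ _
          _ = γ * s * ‖u‖ ^ 2 := by
              simp [norm_smul, abs_of_nonneg hs0]
              ring
      linarith
  have := hanti (Set.left_mem_Icc.2 zero_le_one) (Set.right_mem_Icc.2 zero_le_one) zero_le_one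
  simp only [hφ] at this
  simp at this
  linarith

/-- Averaged gradient-norm bound: the mean squared gradient norm along the trajectory
is bounded by an `O(1/T)` term plus the average squared deviation of the updates from
the true gradients. -/
theorem averaged_gradient_norm_bound
    {E : Type*} [NormedAddCommGroup E] [InnerProductSpace ℝ E] [CompleteSpace E]
    (γ : ℝ) (hγ : 0 < γ) (μ : ℝ) (hμ : 0 < μ) (hμγ : μ ≤ 1 / γ)
    (L : ℕ → E → ℝ) (hL : ∀ t, Differentiable ℝ (L t))
    (hL0 : ∀ t x, 0 ≤ L t x)
    (hlip : ∀ t, ∀ x y : E, ‖gradient (L t) x - gradient (L t) y‖ ≤ γ * ‖x - y‖)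
    (v : ℕ → E) (θ : ℕ → E)
    (hθ : ∀ t, θ (t + 1) = θ t - μ • v t)
    (hmono : ∀ t, L (t + 1) (θ (t + 1)) ≤ L t (θ (t + 1)))
    (T : ℕ) (hT : 1 ≤ T) :
    (1 / (T : ℝ)) * ∑ t ∈ Finset.range T, ‖gradient (L t) (θ t)‖ ^ 2 ≤
      2 * L 0 (θ 0) / (μ * T)
        + (1 / (T : ℝ)) * ∑ t ∈ Finset.range T, ‖v t - gradient (L t) (θ t)‖ ^ 2 := by
  have hγμ : γ * μ ≤ 1 := by
    rw [le_div_iff₀ hγ] at hμγ; linarith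
  -- per-step inequality
  have step : ∀ t, L (t + 1) (θ (t + 1)) ≤ L t (θ t) - μ / 2 * ‖gradient (L t) (θ t)‖ ^ 2
      + μ / 2 * ‖v t - gradient (L t) (θ t)‖ ^ 2 := by
    intro t
    set g := gradient (L t) (θ t) with hgd
    have hstep : θ (t + 1) = θ t + (-μ) • v t := by
      rw [hθ t]; module
    have hd := descent_lemma γ hγ (L t) (hL t) (hlip t) (θ t) ((-μ) • v t)
    rw [← hstep] at hd
    have hinner : (inner ℝ g ((-μ) • v t) : ℝ) = -μ * inner ℝ g (v t) := by
      rw [real_inner_smul_right]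
    have hnorm : ‖(-μ) • v t‖ ^ 2 = μ ^ 2 * ‖v t‖ ^ 2 := by
      rw [norm_smul]; simp [abs_of_pos hμ]; ring
    rw [hinner, hnorm] at hd
    have hexp : ‖v t - g‖ ^ 2 = ‖v t‖ ^ 2 - 2 * inner ℝ g (v t) + ‖g‖ ^ 2 := by
      rw [← real_inner_self_eq_norm_sq, inner_sub_sub_self,
        real_inner_self_eq_norm_sq, real_inner_self_eq_norm_sq, real_inner_comm]
      ring
    have hv2 : (0:ℝ) ≤ ‖v t‖ ^ 2 := sq_nonneg _
    have h1 : L t (θ (t + 1)) ≤ L t (θ t) - μ / 2 * ‖g‖ ^ 2 + μ / 2 * ‖v t - g‖ ^ 2 := by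
      nlinarith [hd, hexp, mul_le_of_le_one_left hμ.le hγμ]
    exact (hmono t).trans h1
  -- telescoping
  have tele : μ / 2 * ∑ t ∈ Finset.range T, ‖gradient (L t) (θ t)‖ ^ 2
      ≤ L 0 (θ 0) + μ / 2 * ∑ t ∈ Finset.range T, ‖v t - gradient (L t) (θ t)‖ ^ 2 := by
    have hsum : ∑ t ∈ Finset.range T,
        (μ / 2 * ‖gradient (L t) (θ t)‖ ^ 2 - μ / 2 * ‖v t - gradient (L t) (θ t)‖ ^ 2)
        ≤ ∑ t ∈ Finset.range T, (L t (θ t) - L (t + 1) (θ (t + 1))) := by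
      apply Finset.sum_le_sum
      intro t _
      have := step t
      linarith
    rw [Finset.sum_range_sub' (fun t => L t (θ t)) T] at hsum
    rw [Finset.sum_sub_distrib, ← Finset.mul_sum, ← Finset.mul_sum] at hsum
    have := hL0 T (θ T)
    linarith
  set Sg := ∑ t ∈ Finset.range T, ‖gradient (L t) (θ t)‖ ^ 2 with hSg
  set Se := ∑ t ∈ Finset.range T, ‖v t - gradient (L t) (θ t)‖ ^ 2 with hSe
  have hTpos : (0:ℝ) < T := by exact_mod_cast hT
  have key : Sg ≤ 2 * L 0 (θ 0) / μ + Se := by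
    rw [div_add' _ _ _ (ne_of_gt hμ), le_div_iff₀ hμ]
    nlinarith [tele]
  calc (1 / (T:ℝ)) * Sg ≤ (1 / (T:ℝ)) * (2 * L 0 (θ 0) / μ + Se) := by
        apply mul_le_mul_of_nonneg_left key
        positivity
    _ = 2 * L 0 (θ 0) / (μ * T) + (1 / (T:ℝ)) * Se := by
        field_simp
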